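/- Let A be a C*-algebra with a completely full element a ∈ (A₊)₁, let π : A → B(H) be a non-degenerate representation, and let C ⊆ B(H) be a unital C*-algebra commuting with π(A). Suppose there is a net of sequences (v_{j,n})_n in A with Σ_n v_{j,n} v_{j,n}* ≤ 1 and Σ_n v_{j,n} a v_{j,n}* → 1 strictly. Then for every c ∈ C, ‖π(a) c‖ = ‖c‖; i.e., the map c ↦ π(a)c is isometric. -/

import Mathlib

open scoped ComplexOrder

/-- A positive element `b` of a C*-algebra is *full* if the only closed two-sided ideal
containing it is the whole algebra. -/
def IsFullElement {A : Type*} [NonUnitalCStarAlgebra A] (b : A) : Prop :=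
  ∀ I : TwoSidedIdeal A, IsClosed (I : Set A) → b ∈ I → ∀ x : A, x ∈ I

/-- An element `c` with `0 ≤ c`, `‖c‖ ≤ 1` is *completely full* if `h(c)` is full for every
nonnegative `h ∈ C_0(0,1]` with `h 1 > 0`. -/
def IsCompletelyFull {A : Type*} [NonUnitalCStarAlgebra A] [PartialOrder A]
    [StarOrderedRing A] (c : A) : Prop :=
  0 ≤ c ∧ ‖c‖ ≤ 1 ∧ ∀ h : ℝ → ℝ, Continuous h → h 0 = 0 → (∀ t, 0 ≤ h t) → 0 < h 1 →
    IsFullElement (cfcₙ h c)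

lemma auxB {H : Type*} [NormedAddCommGroup H] [InnerProductSpace ℂ H] [CompleteSpace H]
    {w : ℕ → H →L[ℂ] H}
    (hw : Summable fun n => w n * star (w n))
    (hle : (∑' n, w n * star (w n)) ≤ 1) (ξ : H) :
    Summable (fun n => ‖(star (w n)) ξ‖ ^ 2) ∧ ∑' n, ‖(star (w n)) ξ‖ ^ 2 ≤ ‖ξ‖ ^ 2 := by
  have key : ∀ n, (inner ℂ ξ ((w n * star (w n)) ξ) : ℂ) = (((‖(star (w n)) ξ‖ ^ 2 : ℝ)) : ℂ) := by
    intro n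
    have h0 : (w n * star (w n)) ξ = w n ((star (w n)) ξ) := rfl
    rw [h0, ContinuousLinearMap.star_eq_adjoint, ← ContinuousLinearMap.adjoint_inner_left,
      inner_self_eq_norm_sq_to_K]
    norm_cast
  have happ : Summable (fun n => (w n * star (w n)) ξ) := by
    have := hw.map (ContinuousLinearMap.apply ℂ H ξ) (ContinuousLinearMap.apply ℂ H ξ).continuous
    exact this
  have hs1 : Summable (fun n => (inner ℂ ξ ((w n * star (w n)) ξ) : ℂ)) := by
    have := happ.map (innerSL ℂ ξ) (innerSL ℂ ξ).continuous
    exact this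
  have hs2 : Summable (fun n => ‖(star (w n)) ξ‖ ^ 2) := by
    rw [← Complex.summable_ofReal]
    exact hs1.congr fun n => (key n)
  refine ⟨hs2, ?_⟩
  have htsum : (inner ℂ ξ ((∑' n, w n * star (w n)) ξ) : ℂ)
      = ∑' n, (inner ℂ ξ ((w n * star (w n)) ξ) : ℂ) := by
    have h0 : (∑' n, w n * star (w n)) ξ = ∑' n, (w n * star (w n)) ξ := by
      have := (ContinuousLinearMap.apply ℂ H ξ).map_tsum hw
      simpa using this
    rw [h0]
    exact (innerSL ℂ ξ).map_tsum happ
  have hre : (∑' n, ‖(star (w n)) ξ‖ ^ 2)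
      = Complex.re (inner ℂ ξ ((∑' n, w n * star (w n)) ξ) : ℂ) := by
    rw [htsum]
    have : (∑' n, (inner ℂ ξ ((w n * star (w n)) ξ) : ℂ))
        = ((∑' n, ‖(star (w n)) ξ‖ ^ 2 : ℝ) : ℂ) := by
      rw [Complex.ofReal_tsum]
      exact tsum_congr fun n => key n
    rw [this, Complex.ofReal_re]
  rw [hre]
  have hpos : (1 - ∑' n, w n * star (w n)).IsPositive := by
    rw [← ContinuousLinearMap.le_def]; exact hle
  have h2 := hpos.inner_nonneg_right ξ
  simp only [ContinuousLinearMap.sub_apply, inner_sub_right, map_sub,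
    ContinuousLinearMap.one_apply, RCLike.re_eq_complex_re] at h2
  have hxx : Complex.re (inner ℂ ξ ξ : ℂ) = ‖ξ‖ ^ 2 := by
    rw [inner_self_eq_norm_sq_to_K]; simp [← Complex.ofReal_pow]
  rw [Complex.nonneg_iff, Complex.sub_re] at h2
  rw [hxx] at h2
  linarith [h2.1]
lemma auxC {g h : ℕ → ℝ} (hg0 : ∀ n, 0 ≤ g n) (hh0 : ∀ n, 0 ≤ h n)
    (hg : Summable fun n => g n ^ 2) (hh : Summable fun n => h n ^ 2) :
    Summable (fun n => g n * h n) ∧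
      ∑' n, g n * h n ≤ Real.sqrt (∑' n, g n ^ 2) * Real.sqrt (∑' n, h n ^ 2) := by
  have hsum : Summable (fun n => g n * h n) := by
    refine Summable.of_nonneg_of_le (fun n => mul_nonneg (hg0 n) (hh0 n)) (fun n => ?_)
      ((hg.add hh).div_const 2)
    nlinarith [sq_nonneg (g n - h n)]
  refine ⟨hsum, Summable.tsum_le_of_sum_le hsum fun s => ?_⟩
  have h1 : (∑ n ∈ s, g n * h n) ^ 2 ≤ (∑ n ∈ s, g n ^ 2) * ∑ n ∈ s, h n ^ 2 :=
    Finset.sum_mul_sq_le_sq_mul_sq s g h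
  have h2 : (∑ n ∈ s, g n ^ 2) ≤ ∑' n, g n ^ 2 :=
    Summable.sum_le_tsum s (fun n _ => sq_nonneg _) hg
  have h3 : (∑ n ∈ s, h n ^ 2) ≤ ∑' n, h n ^ 2 :=
    Summable.sum_le_tsum s (fun n _ => sq_nonneg _) hh
  have h4 : 0 ≤ ∑ n ∈ s, g n * h n :=
    Finset.sum_nonneg fun n _ => mul_nonneg (hg0 n) (hh0 n)
  have h5 : (∑ n ∈ s, g n * h n) = Real.sqrt ((∑ n ∈ s, g n * h n) ^ 2) :=
    (Real.sqrt_sq h4).symm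
  rw [h5, ← Real.sqrt_mul (tsum_nonneg fun n => sq_nonneg (g n))]
  exact Real.sqrt_le_sqrt (h1.trans (mul_le_mul h2 h3 (Finset.sum_nonneg fun n _ => sq_nonneg _)
    (tsum_nonneg fun n => sq_nonneg _)))

lemma auxL1 {H : Type*} [NormedAddCommGroup H] [InnerProductSpace ℂ H] [CompleteSpace H]
    {w : ℕ → H →L[ℂ] H} {b : H →L[ℂ] H}
    (hw : Summable fun n => w n * star (w n))
    (hle : (∑' n, w n * star (w n)) ≤ 1)
    (hb : Summable fun n => w n * b * star (w n)) :
    ‖∑' n, w n * b * star (w n)‖ ≤ ‖b‖ := by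
  refine ContinuousLinearMap.opNorm_le_bound _ (norm_nonneg b) (fun ξ => ?_)
  set T := ∑' n, w n * b * star (w n) with hT
  have key : ∀ η : H, ‖(inner ℂ η (T ξ) : ℂ)‖ ≤ ‖b‖ * (‖η‖ * ‖ξ‖) := by
    intro η
    have happ : Summable (fun n => (w n * b * star (w n)) ξ) := by
      have := hb.map (ContinuousLinearMap.apply ℂ H ξ) (ContinuousLinearMap.apply ℂ H ξ).continuous
      exact this
    have hTξ : T ξ = ∑' n, (w n * b * star (w n)) ξ := by
      have := (ContinuousLinearMap.apply ℂ H ξ).map_tsum hb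
      simpa using this
    have h1 : (inner ℂ η (T ξ) : ℂ) = ∑' n, (inner ℂ η ((w n * b * star (w n)) ξ) : ℂ) := by
      rw [hTξ]; exact (innerSL ℂ η).map_tsum happ
    have h2 : ∀ n, (inner ℂ η ((w n * b * star (w n)) ξ) : ℂ)
        = (inner ℂ ((star (w n)) η) (b ((star (w n)) ξ)) : ℂ) := by
      intro n
      have h0 : (w n * b * star (w n)) ξ = w n (b ((star (w n)) ξ)) := rfl
      rw [h0, ContinuousLinearMap.star_eq_adjoint, ← ContinuousLinearMap.adjoint_inner_left]
    obtain ⟨hgs, hgle⟩ := auxB hw hle ξ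
    obtain ⟨hhs, hhle⟩ := auxB hw hle η
    set g : ℕ → ℝ := fun n => ‖(star (w n)) η‖ with hgdef
    set k : ℕ → ℝ := fun n => ‖(star (w n)) ξ‖ with hkdef
    obtain ⟨hcs_sum, hcs⟩ := auxC (fun n => norm_nonneg _) (fun n => norm_nonneg _) hhs hgs
    have hbound : ∀ n, ‖(inner ℂ η ((w n * b * star (w n)) ξ) : ℂ)‖ ≤ ‖b‖ * (g n * k n) := by
      intro n
      rw [h2 n]
      calc ‖(inner ℂ ((star (w n)) η) (b ((star (w n)) ξ)) : ℂ)‖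
          ≤ ‖(star (w n)) η‖ * ‖b ((star (w n)) ξ)‖ := norm_inner_le_norm _ _
        _ ≤ ‖(star (w n)) η‖ * (‖b‖ * ‖(star (w n)) ξ‖) := by
            gcongr; exact ContinuousLinearMap.le_opNorm b _
        _ = ‖b‖ * (g n * k n) := by ring
    have hnorm_sum : Summable (fun n => ‖(inner ℂ η ((w n * b * star (w n)) ξ) : ℂ)‖) := by
      refine Summable.of_nonneg_of_le (fun n => norm_nonneg _) hbound ?_
      exact (hcs_sum).mul_left _
    calc ‖(inner ℂ η (T ξ) : ℂ)‖ = ‖∑' n, (inner ℂ η ((w n * b * star (w n)) ξ) : ℂ)‖ := by rw [h1]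
      _ ≤ ∑' n, ‖(inner ℂ η ((w n * b * star (w n)) ξ) : ℂ)‖ := norm_tsum_le_tsum_norm hnorm_sum
      _ ≤ ∑' n, ‖b‖ * (g n * k n) := Summable.tsum_le_tsum hbound hnorm_sum (hcs_sum.mul_left _)
      _ = ‖b‖ * ∑' n, g n * k n := by rw [tsum_mul_left]
      _ ≤ ‖b‖ * (Real.sqrt (∑' n, g n ^ 2) * Real.sqrt (∑' n, k n ^ 2)) :=
          mul_le_mul_of_nonneg_left hcs (norm_nonneg b)
      _ ≤ ‖b‖ * (‖η‖ * ‖ξ‖) := by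
          have hη : Real.sqrt (∑' n, g n ^ 2) ≤ ‖η‖ :=
            (Real.sqrt_le_sqrt hhle).trans (by rw [Real.sqrt_sq (norm_nonneg _)])
          have hξ' : Real.sqrt (∑' n, k n ^ 2) ≤ ‖ξ‖ :=
            (Real.sqrt_le_sqrt hgle).trans (by rw [Real.sqrt_sq (norm_nonneg _)])
          exact mul_le_mul_of_nonneg_left
            (mul_le_mul hη hξ' (Real.sqrt_nonneg _) (norm_nonneg _)) (norm_nonneg b)
  have hfin := key (T ξ)
  have hsq : ‖T ξ‖ ^ 2 ≤ ‖b‖ * (‖T ξ‖ * ‖ξ‖) := by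
    have : (inner ℂ (T ξ) (T ξ) : ℂ) = ((‖T ξ‖ ^ 2 : ℝ) : ℂ) := by
      rw [inner_self_eq_norm_sq_to_K]; norm_cast
    rw [this] at hfin
    calc ‖T ξ‖ ^ 2 = ‖((‖T ξ‖ ^ 2 : ℝ) : ℂ)‖ := by
          rw [Complex.norm_real]; exact (abs_of_nonneg (sq_nonneg _)).symm
      _ ≤ ‖b‖ * (‖T ξ‖ * ‖ξ‖) := hfin
  rcases eq_or_lt_of_le (norm_nonneg (T ξ)) with h0 | h0
  · rw [← h0]; positivity
  · nlinarith [hsq, norm_nonneg ξ, norm_nonneg b]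

/-- Let `A` be a C*-algebra with a completely full element `a`, `π : A → B(H)` a
non-degenerate representation, and `C ⊆ B(H)` a unital C*-subalgebra commuting with `π(A)`.
If there is a net of sequences `(v_{j,n})ₙ` in `A` with `Σₙ v_{j,n} v_{j,n}* ≤ 1` and
`Σₙ v_{j,n} a v_{j,n}* → 1` strictly, then `‖π(a) c‖ = ‖c‖` for every `c ∈ C`. -/
theorem stmt5 {A : Type*} [NonUnitalCStarAlgebra A] [PartialOrder A] [StarOrderedRing A]
    [StarModule ℂ A]
    {H : Type*} [NormedAddCommGroup H] [InnerProductSpace ℂ H] [CompleteSpace H]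
    (a : A) (ha : IsCompletelyFull a)
    (π : A →⋆ₙₐ[ℂ] (H →L[ℂ] H))
    (hπ_nondeg : Dense (Submodule.span ℂ {ξ : H | ∃ (x : A) (η : H), π x η = ξ} : Set H))
    (C : StarSubalgebra ℂ (H →L[ℂ] H)) (hC_closed : IsClosed (C : Set (H →L[ℂ] H)))
    (hC_comm : ∀ x : A, ∀ c ∈ C, Commute (π x) c)
    {J : Type*} [Nonempty J] [SemilatticeSup J]
    (v : J → ℕ → A)
    (hsum : ∀ j, Summable (fun n => π (v j n * a * star (v j n))))
    (hsum' : ∀ j, Summable (fun n => π (v j n * star (v j n))))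
    (hle : ∀ j, (∑' n, π (v j n * star (v j n))) ≤ 1)
    (hstrict : ∀ b : A, Filter.Tendsto
      (fun j => ‖(∑' n, π (v j n * a * star (v j n))) * π b - π b‖)
      Filter.atTop (nhds 0)) :
    ∀ c ∈ C, ‖π a * c‖ = ‖c‖ := by
  intro c hc
  obtain ⟨-, ha1, -⟩ := ha
  have hπa : ‖π a‖ ≤ 1 := (NonUnitalStarAlgHom.norm_apply_le π a).trans ha1
  set b : H →L[ℂ] H := π a * c with hbdef
  have dir1 : ‖b‖ ≤ ‖c‖ := by
    calc ‖π a * c‖ ≤ ‖π a‖ * ‖c‖ := norm_mul_le _ _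
      _ ≤ 1 * ‖c‖ := mul_le_mul_of_nonneg_right hπa (norm_nonneg c)
      _ = ‖c‖ := one_mul _
  set T : J → (H →L[ℂ] H) := fun j => ∑' n, π (v j n * a * star (v j n)) with hTdef
  -- rewrite each term using commutation
  have hWc : ∀ j n, π (v j n * a * star (v j n)) * c = π (v j n) * b * star (π (v j n)) := by
    intro j n
    have h1 : star (π (v j n)) * c = c * star (π (v j n)) := by
      have := (hC_comm (star (v j n)) c hc).eq
      rwa [map_star] at this
    calc π (v j n * a * star (v j n)) * c
        = π (v j n) * π a * (star (π (v j n)) * c) := by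
          rw [map_mul, map_mul, map_star, mul_assoc]
      _ = π (v j n) * π a * (c * star (π (v j n))) := by rw [h1]
      _ = π (v j n) * b * star (π (v j n)) := by
          rw [hbdef, ← mul_assoc, mul_assoc (π (v j n))]
  have hW : ∀ j n, π (v j n * star (v j n)) = π (v j n) * star (π (v j n)) := by
    intro j n; rw [map_mul, map_star]
  -- key norm bound ‖T j * c‖ ≤ ‖b‖
  have hTc : ∀ j, ‖T j * c‖ ≤ ‖b‖ := by
    intro j
    have hw : Summable (fun n => π (v j n) * star (π (v j n))) :=
      (hsum' j).congr (hW j)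
    have hle' : (∑' n, π (v j n) * star (π (v j n))) ≤ 1 := by
      rw [← tsum_congr (hW j)]; exact hle j
    have hbsum : Summable (fun n => π (v j n) * b * star (π (v j n))) :=
      ((hsum j).mul_right c).congr (hWc j)
    have heq : T j * c = ∑' n, π (v j n) * b * star (π (v j n)) := by
      rw [hTdef, ← (hsum j).tsum_mul_right c]
      exact tsum_congr (hWc j)
    rw [heq]
    exact auxL1 hw hle' hbsum
  -- commutation of T j with c
  have hcomm_j : ∀ j, T j * c = c * T j := by
    intro j
    rw [hTdef, ← (hsum j).tsum_mul_right c, ← (hsum j).tsum_mul_left c]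
    exact tsum_congr fun n => (hC_comm (v j n * a * star (v j n)) c hc).eq
  -- strong convergence on the span
  have hlim : ∀ ξ ∈ Submodule.span ℂ {ξ : H | ∃ (x : A) (η : H), π x η = ξ},
      Filter.Tendsto (fun j => (T j) ξ) Filter.atTop (nhds ξ) := by
    intro ξ hξ
    induction hξ using Submodule.span_induction with
    | mem x hx =>
      obtain ⟨x0, η, rfl⟩ := hx
      rw [tendsto_iff_norm_sub_tendsto_zero]
      have h0 := (hstrict x0).mul_const ‖η‖
      rw [zero_mul] at h0
      refine squeeze_zero (fun j => norm_nonneg _) (fun j => ?_) h0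
      calc ‖T j (π x0 η) - π x0 η‖ = ‖(T j * π x0 - π x0) η‖ := by
            simp [ContinuousLinearMap.sub_apply, ContinuousLinearMap.mul_apply]
        _ ≤ ‖T j * π x0 - π x0‖ * ‖η‖ := ContinuousLinearMap.le_opNorm _ _
    | zero => simpa using tendsto_const_nhds
    | add x y hx hy ihx ihy => simpa using ihx.add ihy
    | smul r x hx ih => simpa using ih.const_smul r
  -- norm bound on span
  have hbnd : ∀ ξ ∈ Submodule.span ℂ {ξ : H | ∃ (x : A) (η : H), π x η = ξ},
      ‖c ξ‖ ≤ ‖b‖ * ‖ξ‖ := by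
    intro ξ hξ
    have h1 : Filter.Tendsto (fun j => c ((T j) ξ)) Filter.atTop (nhds (c ξ)) :=
      (c.continuous.tendsto _).comp (hlim ξ hξ)
    have h2 : ∀ j, ‖c ((T j) ξ)‖ ≤ ‖b‖ * ‖ξ‖ := by
      intro j
      have h3 : c ((T j) ξ) = (T j * c) ξ := by
        rw [hcomm_j j]; rfl
      rw [h3]
      calc ‖(T j * c) ξ‖ ≤ ‖T j * c‖ * ‖ξ‖ := ContinuousLinearMap.le_opNorm _ _
        _ ≤ ‖b‖ * ‖ξ‖ := mul_le_mul_of_nonneg_right (hTc j) (norm_nonneg ξ)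
    exact le_of_tendsto h1.norm (Filter.Eventually.of_forall h2)
  -- extend to all of H by density
  have hall : ∀ ξ : H, ‖c ξ‖ ≤ ‖b‖ * ‖ξ‖ := by
    have hclosed : IsClosed {ξ : H | ‖c ξ‖ ≤ ‖b‖ * ‖ξ‖} :=
      isClosed_le (c.continuous.norm) (continuous_const.mul continuous_norm)
    have hsub : (Submodule.span ℂ {ξ : H | ∃ (x : A) (η : H), π x η = ξ} : Set H)
        ⊆ {ξ : H | ‖c ξ‖ ≤ ‖b‖ * ‖ξ‖} := fun ξ hξ => hbnd ξ hξ
    intro ξ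
    have hξ' : ξ ∈ closure (Submodule.span ℂ {ξ : H | ∃ (x : A) (η : H), π x η = ξ} : Set H) := by
      rw [hπ_nondeg.closure_eq]; trivial
    exact closure_minimal hsub hclosed hξ'
  have dir2 : ‖c‖ ≤ ‖b‖ := ContinuousLinearMap.opNorm_le_bound c (norm_nonneg b) hall
  exact le_antisymm dir1 dir2
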